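/- The integral ∫₀^1 (ln x)/(x²−1) dx equals π²/8. -/

import Mathlib

open MeasureTheory Real Set

private lemma exp_neg_deriv : ∀ x ∈ Ioi (0:ℝ),
    HasDerivWithinAt (fun t : ℝ => rexp (-t)) (-rexp (-x)) (Ioi 0) x := by
  intro x _
  have h := ((Real.hasDerivAt_exp (-x)).comp x (hasDerivAt_neg x))
  simpa [mul_comm, Function.comp_def] using h.hasDerivWithinAt

private lemma exp_neg_inj : (Ioi (0:ℝ)).InjOn (fun t : ℝ => rexp (-t)) := by
  intro a _ b _ h
  simpa using Real.exp_injective h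

private lemma exp_neg_image : (fun t : ℝ => rexp (-t)) '' Ioi 0 = Ioo 0 1 := by
  ext x
  constructor
  · rintro ⟨t, ht, rfl⟩
    exact ⟨Real.exp_pos _, by rw [Real.exp_lt_one_iff]; linarith [mem_Ioi.mp ht]⟩
  · rintro ⟨hx0, hx1⟩
    refine ⟨-Real.log x, ?_, by simp [Real.exp_log hx0]⟩
    simp only [mem_Ioi]
    have := Real.log_neg hx0 hx1
    linarith

private lemma key (n : ℕ) :
    IntegrableOn (fun x : ℝ => x ^ n * (-Real.log x)) (Ioo 0 1) ∧
    ∫ x in Ioo (0:ℝ) 1, x ^ n * (-Real.log x) = 1 / ((n : ℝ) + 1) ^ 2 := by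
  set g : ℝ → ℝ := fun x => x ^ n * (-Real.log x) with hg
  have hb : (0:ℝ) < (n : ℝ) + 1 := by positivity
  have hcongr : ∀ t ∈ Ioi (0:ℝ),
      |(-rexp (-t))| • g (rexp (-t)) = t ^ ((2:ℝ) - 1) * rexp (-(((n:ℝ)+1) * t)) := by
    intro t ht
    have ht' : (0:ℝ) < t := ht
    have h1 : |(-rexp (-t))| = rexp (-t) := by
      rw [abs_neg, abs_of_pos (Real.exp_pos _)]
    have h2 : g (rexp (-t)) = rexp (-t) ^ n * t := by
      simp [hg, Real.log_exp]
    have he : rexp (-t) * rexp (-t) ^ n = rexp (-(((n:ℝ)+1) * t)) := by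
      rw [← Real.exp_nat_mul, ← Real.exp_add]
      congr 1
      ring
    have h3 : rexp (-t) * (rexp (-t) ^ n * t) = t * rexp (-(((n:ℝ)+1) * t)) := by
      calc rexp (-t) * (rexp (-t) ^ n * t) = rexp (-t) * rexp (-t) ^ n * t := by ring
        _ = t * rexp (-(((n:ℝ)+1) * t)) := by rw [he]; exact mul_comm _ _
    have h4 : t ^ ((2:ℝ) - 1) = t := by
      norm_num [Real.rpow_one]
    rw [smul_eq_mul, h1, h2, h3, h4]
  constructor
  · rw [← exp_neg_image,
      integrableOn_image_iff_integrableOn_abs_deriv_smul measurableSet_Ioi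
        exp_neg_deriv exp_neg_inj g]
    have hint := integrableOn_rpow_mul_exp_neg_mul_rpow
      (show (-1:ℝ) < 1 by norm_num) (show (0:ℝ) < 1 by norm_num) hb
    refine (hint.congr_fun ?_ measurableSet_Ioi)
    intro t ht
    have h := (hcongr t ht).symm
    simp only [Real.rpow_one]
    rw [← h]
    rw [show ((2:ℝ) - 1) = 1 by norm_num, Real.rpow_one]
    ring
  · rw [← exp_neg_image,
      integral_image_eq_integral_abs_deriv_smul measurableSet_Ioi exp_neg_deriv exp_neg_inj g]
    rw [setIntegral_congr_fun measurableSet_Ioi hcongr]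
    rw [integral_rpow_mul_exp_neg_mul_Ioi (by norm_num : (0:ℝ) < 2) hb]
    rw [Real.Gamma_two, mul_one]
    rw [show (2:ℝ) = ((2:ℕ):ℝ) by norm_num, Real.rpow_natCast]
    rw [div_pow, one_pow]

private lemma hasSum_odd : HasSum (fun n : ℕ => 1 / (2 * (n:ℝ) + 1) ^ 2) (π ^ 2 / 8) := by
  have h := hasSum_zeta_two
  set f : ℕ → ℝ := fun n => (1:ℝ) / (n:ℝ) ^ 2 with hf
  have he : HasSum (fun k : ℕ => f (2 * k)) (π ^ 2 / 24) := by
    have h4 := h.mul_left (1/4)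
    have : (fun k : ℕ => (1/4) * f k) = fun k : ℕ => f (2 * k) := by
      funext k
      simp only [hf]
      rcases eq_or_ne (k:ℝ) 0 with hk | hk
      · simp [hk]
      · push_cast
        field_simp
        ring
    rw [this] at h4
    convert! h4 using 1
    ring
  have hinj : Function.Injective (fun k : ℕ => 2 * k + 1) := by
    intro a b hab
    simp only at hab
    omega
  have hso : Summable (fun k : ℕ => f (2 * k + 1)) :=
    h.summable.comp_injective hinj
  obtain ⟨a, ha⟩ := hso
  have htot := he.even_add_odd ha
  have huniq := htot.unique h
  have ha8 : a = π ^ 2 / 8 := by linarith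
  rw [ha8] at ha
  convert ha using 2 with n
  simp only [hf]
  push_cast
  ring_nf

theorem stmt6 :
    ∫ x in Set.Ioo (0:ℝ) 1, Real.log x / (x^2 - 1) = π^2 / 8 := by
  set F : ℕ → ℝ → ℝ := fun n x => x ^ (2 * n) * (-Real.log x) with hF
  have hint : ∀ n, IntegrableOn (F n) (Ioo 0 1) := fun n => (key (2 * n)).1
  have hval : ∀ n, ∫ x in Ioo (0:ℝ) 1, F n x = 1 / (2 * (n:ℝ) + 1) ^ 2 := by
    intro n
    rw [hF, (key (2 * n)).2]
    push_cast
    ring_nf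
  have hnn : ∀ n, ∀ x ∈ Ioo (0:ℝ) 1, 0 ≤ F n x := by
    intro n x hx
    have h1 : (0:ℝ) ≤ x ^ (2 * n) := pow_nonneg hx.1.le _
    have h2 : Real.log x ≤ 0 := Real.log_nonpos hx.1.le hx.2.le
    exact mul_nonneg h1 (by linarith)
  have hnorm : ∀ n, ∫ x in Ioo (0:ℝ) 1, ‖F n x‖ = 1 / (2 * (n:ℝ) + 1) ^ 2 := by
    intro n
    rw [← hval n]
    refine setIntegral_congr_fun measurableSet_Ioo fun x hx => ?_
    exact abs_of_nonneg (hnn n x hx)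
  have hsummable : Summable fun n : ℕ => ∫ x in Ioo (0:ℝ) 1, ‖F n x‖ := by
    refine hasSum_odd.summable.congr fun n => ?_
    rw [hnorm n]
  have hswap := integral_tsum_of_summable_integral_norm
    (μ := volume.restrict (Ioo (0:ℝ) 1)) (fun n => hint n) hsummable
  have heq : ∀ x ∈ Ioo (0:ℝ) 1, Real.log x / (x ^ 2 - 1) = ∑' n : ℕ, F n x := by
    intro x hx
    have hx2 : x ^ 2 < 1 := by nlinarith [hx.1, hx.2]
    have hx2' : (0:ℝ) ≤ x ^ 2 := sq_nonneg x
    have hne : x ^ 2 - 1 ≠ 0 := by linarith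
    have hgeom : ∑' n : ℕ, (x ^ 2) ^ n = (1 - x ^ 2)⁻¹ :=
      tsum_geometric_of_lt_one hx2' hx2
    have : (∑' n : ℕ, F n x) = (∑' n : ℕ, (x ^ 2) ^ n) * (-Real.log x) := by
      rw [← tsum_mul_right]
      exact tsum_congr fun n => by simp only [hF, pow_mul]
    have hne' : (1:ℝ) - x ^ 2 ≠ 0 := by intro h; exact hne (by linarith)
    rw [this, hgeom]
    field_simp
    ring
  calc ∫ x in Ioo (0:ℝ) 1, Real.log x / (x ^ 2 - 1)
      = ∫ x in Ioo (0:ℝ) 1, ∑' n : ℕ, F n x :=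
        setIntegral_congr_fun measurableSet_Ioo heq
    _ = ∑' n : ℕ, ∫ x in Ioo (0:ℝ) 1, F n x := hswap.symm
    _ = π ^ 2 / 8 := by
        rw [← hasSum_odd.tsum_eq]
        exact tsum_congr fun n => hval n
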